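/- The circulant graphs C₃₂({2,3,4,13}) and C₃₂({2,4,5,11}) are isomorphic as simple graphs, but they are not Adám isomorphic: for every unit x of ℤ/32ℤ, x·({2,3,4,13} ∪ -{2,3,4,13}) ≠ {2,4,5,11} ∪ -{2,4,5,11} as subsets of ℤ/32ℤ. -/

import Mathlib

open Pointwise

/-- The circulant graph `Cₙ(R)`: vertices are `ZMod n`, and distinct `u v` are
adjacent iff `u - v ∈ R` or `v - u ∈ R`. -/
def circulantGraph (n : ℕ) (R : Set (ZMod n)) : SimpleGraph (ZMod n) where
  Adj u v := u ≠ v ∧ (u - v ∈ R ∨ v - u ∈ R)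
  symm := ⟨fun u v h => ⟨h.1.symm, h.2.symm⟩⟩
  loopless := ⟨fun u h => h.1 rfl⟩

def myEquiv : ZMod 32 ≃ ZMod 32 where
  toFun v := v + 8 * (v.val % 2 : ℕ)
  invFun v := v + 24 * (v.val % 2 : ℕ)
  left_inv := by decide
  right_inv := by decide

lemma noAdam : ∀ u : ZMod 32, ¬ ∀ a : ZMod 32,
    ((∃ r : ZMod 32, (r = 2 ∨ r = 3 ∨ r = 4 ∨ r = 13 ∨ -r = 2 ∨ -r = 3 ∨ -r = 4 ∨ -r = 13)
      ∧ u * r = a) ↔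
    (a = 2 ∨ a = 4 ∨ a = 5 ∨ a = 11 ∨ -a = 2 ∨ -a = 4 ∨ -a = 5 ∨ -a = 11)) := by
  decide

theorem stmt19 :
    Nonempty (circulantGraph 32 ({2,3,4,13} : Set (ZMod 32)) ≃g circulantGraph 32 ({2,4,5,11} : Set (ZMod 32))) ∧
    ∀ x : (ZMod 32)ˣ,
      (fun r => (x : ZMod 32) * r) '' (({2,3,4,13} : Set (ZMod 32)) ∪ -({2,3,4,13} : Set (ZMod 32))) ≠ ({2,4,5,11} : Set (ZMod 32)) ∪ -({2,4,5,11} : Set (ZMod 32)) := by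
  constructor
  · refine ⟨⟨myEquiv, ?_⟩⟩
    intro a b
    show (_ ≠ _ ∧ _) ↔ (_ ≠ _ ∧ _)
    simp only [Set.mem_insert_iff, Set.mem_singleton_iff]
    revert a b
    decide
  · intro x h
    apply noAdam (x : ZMod 32)
    intro a
    have h' : ∀ b : ZMod 32, b ∈ ((fun r => (x : ZMod 32) * r) ''
        (({2,3,4,13} : Set (ZMod 32)) ∪ -({2,3,4,13} : Set (ZMod 32)))) ↔
        b ∈ (({2,4,5,11} : Set (ZMod 32)) ∪ -({2,4,5,11} : Set (ZMod 32))) := by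
      rw [h]; intro b; rfl
    have := h' a
    simpa only [Set.mem_image, Set.mem_union, Set.mem_neg, Set.mem_insert_iff,
      Set.mem_singleton_iff, or_assoc] using this
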